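/- Assume 0 < μ_1 (the focusing case) and let β̄ be the unique zero of g in (−∞, μ_1). Then for every β ∈ ℝ \ {μ_1, …, μ_n}, one has (β − μ_j)·g(β) > 0 for all j = 1, …, n if and only if β < β̄. -/
import Mathlib


open Set Finset

/-- Focusing case: the positivity condition `(β - μⱼ)·g(β) > 0` for all `j` holds
precisely for `β < β̄`, where `β̄` is the unique zero of `g` in `(-∞, μ₁)`. -/
theorem focusing_branch_interval (n : ℕ) (hn : 2 ≤ n) (μ : Fin n → ℝ) (hμ : Monotone μ)
    (g : ℝ → ℝ)
    (hg : ∀ β : ℝ, (∀ j, β ≠ μ j) → g β = 1 + β * ∑ j, 1 / (μ j - β))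
    (hfoc : 0 < μ ⟨0, by omega⟩)
    (βb : ℝ) (hβb : βb < μ ⟨0, by omega⟩) (hzero : g βb = 0)
    (huniq : ∀ β' : ℝ, β' < μ ⟨0, by omega⟩ → g β' = 0 → β' = βb)
    (β : ℝ) (hβ : ∀ j, β ≠ μ j) :
    (∀ j, 0 < (β - μ j) * g β) ↔ β < βb := by
  set j0 : Fin n := ⟨0, by omega⟩ with hj0
  have hle : ∀ j, μ j0 ≤ μ j := fun j => hμ (show j0 ≤ j by simp [hj0, Fin.le_def])
  have hμpos : ∀ j, 0 < μ j := fun j => lt_of_lt_of_le hfoc (hle j)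
  -- the explicit formula
  set f : ℝ → ℝ := fun x => 1 + x * ∑ j, 1 / (μ j - x) with hf
  -- g is positive on [0, μ0)
  have hposOn : ∀ x : ℝ, 0 ≤ x → x < μ j0 → 0 < g x := by
    intro x hx0 hxlt
    have hne : ∀ j, x ≠ μ j := fun j => ne_of_lt (lt_of_lt_of_le hxlt (hle j))
    rw [hg x hne]
    have hsum : 0 ≤ ∑ j, 1 / (μ j - x) := by
      apply Finset.sum_nonneg
      intro j _
      have : 0 < μ j - x := sub_pos.mpr (lt_of_lt_of_le hxlt (hle j))
      positivity
    nlinarith [mul_nonneg hx0 hsum]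
  -- g is negative for very negative x
  have hnegOn : ∀ x : ℝ, (∀ j, μ j < -x) → g x < 0 := by
    intro x hx
    have hxneg : x < 0 := by
      have := hx j0; linarith [hμpos j0]
    have hne : ∀ j, x ≠ μ j := fun j => by
      have := hμpos j; linarith
    rw [hg x hne]
    have hterm : ∀ j ∈ Finset.univ (α := Fin n), x * (1 / (μ j - x)) < -(1/2) := by
      intro j _
      have hd : 0 < μ j - x := by have := hμpos j; linarith
      rw [mul_one_div, div_lt_iff₀ hd]
      have := hx j
      nlinarith
    have hsum : x * ∑ j, 1 / (μ j - x) < (n : ℝ) * (-(1/2)) := by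
      rw [Finset.mul_sum]
      calc ∑ j, x * (1 / (μ j - x)) < ∑ _j : Fin n, -(1/2 : ℝ) := by
            apply Finset.sum_lt_sum_of_nonempty
            · exact Finset.univ_nonempty_iff.mpr ⟨j0⟩
            · exact hterm
        _ = (n : ℝ) * (-(1/2)) := by simp [Finset.sum_const, mul_comm]
    have hn2 : (2 : ℝ) ≤ (n : ℝ) := by exact_mod_cast hn
    nlinarith
  -- g is negative for x above all μ j
  have hnegAbove : ∀ x : ℝ, (∀ j, μ j < x) → g x < 0 := by
    intro x hx
    have hne : ∀ j, x ≠ μ j := fun j => (ne_of_gt (hx j))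
    rw [hg x hne]
    have hxpos : 0 < x := lt_trans (hμpos j0) (hx j0)
    have hterm : ∀ j ∈ Finset.univ (α := Fin n), x * (1 / (μ j - x)) < -(1/2) := by
      intro j _
      have hd : μ j - x < 0 := sub_neg.mpr (hx j)
      rw [mul_one_div, div_lt_iff_of_neg hd]
      have := hμpos j
      nlinarith
    have hsum : x * ∑ j, 1 / (μ j - x) < (n : ℝ) * (-(1/2)) := by
      rw [Finset.mul_sum]
      calc ∑ j, x * (1 / (μ j - x)) < ∑ _j : Fin n, -(1/2 : ℝ) := by
            apply Finset.sum_lt_sum_of_nonempty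
            · exact Finset.univ_nonempty_iff.mpr ⟨j0⟩
            · exact hterm
        _ = (n : ℝ) * (-(1/2)) := by simp [Finset.sum_const, mul_comm]
    have hn2 : (2 : ℝ) ≤ (n : ℝ) := by exact_mod_cast hn
    nlinarith
  -- continuity of g on intervals below μ0
  have hcont : ∀ a b : ℝ, b < μ j0 → ContinuousOn g (Icc a b) := by
    intro a b hb
    have heq : EqOn g f (Icc a b) := by
      intro x hx
      exact hg x (fun j => ne_of_lt (lt_of_le_of_lt hx.2 (lt_of_lt_of_le hb (hle j))))
    apply ContinuousOn.congr _ heq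
    apply ContinuousOn.add continuousOn_const
    apply ContinuousOn.mul continuousOn_id
    apply continuousOn_finset_sum
    intro j _
    apply ContinuousOn.div continuousOn_const
    · exact (continuousOn_const.sub continuousOn_id)
    · intro x hx
      have : x < μ j := lt_of_le_of_lt hx.2 (lt_of_lt_of_le hb (hle j))
      exact sub_ne_zero.mpr (ne_of_gt this)
  -- βb is negative
  have hβbneg : βb < 0 := by
    by_contra h
    push_neg at h
    have := hposOn βb h hβb
    rw [hzero] at this
    exact lt_irrefl 0 this
  -- key: for β < μ0, g β < 0 ↔ β < βb
  have hkey : β < μ j0 → (g β < 0 ↔ β < βb) := by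
    intro hβlt
    constructor
    · intro hgneg
      by_contra h
      push_neg at h
      rcases eq_or_lt_of_le h with heq | hlt
      · rw [← heq, hzero] at hgneg; exact lt_irrefl 0 hgneg
      · -- βb < β < μ0, g β < 0; β must be < 0 else g β > 0
        have hβ0 : β < 0 := by
          by_contra hb
          push_neg at hb
          linarith [hposOn β hb hβlt]
        have hg0 : g 0 = 1 + 0 * ∑ j, 1/(μ j - 0) := hg 0 (fun j => ne_of_lt (hμpos j))
        have hg0' : (0:ℝ) < g 0 := by rw [hg0]; simp
        have hIVT := intermediate_value_Ioo (le_of_lt hβ0) (hcont β 0 hfoc)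
        have h0mem : (0:ℝ) ∈ Ioo (g β) (g 0) := ⟨hgneg, hg0'⟩
        obtain ⟨c, hc, hgc⟩ := hIVT h0mem
        have hcβb := huniq c (lt_trans hc.2 hfoc) hgc
        linarith [hc.1]
    · intro hlt
      by_contra h
      push_neg at h
      rcases eq_or_lt_of_le h with heq | hgpos
      · exact absurd (huniq β hβlt heq.symm) (ne_of_lt hlt)
      · -- g β > 0 and β < βb: find far-left point with g < 0, IVT
        set x0 : ℝ := min β (-(μ ⟨n-1, by omega⟩)) - 1 with hx0
        have hx0β : x0 < β := by
          have := min_le_left β (-(μ ⟨n-1, by omega⟩)); simp only [hx0]; linarith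
        have hx0neg : ∀ j, μ j < -x0 := by
          intro j
          have h1 : μ j ≤ μ ⟨n-1, by omega⟩ := hμ (by
            apply Fin.mk_le_of_le_val
            simp
            omega)
          have h2 : x0 ≤ -(μ ⟨n-1, by omega⟩) - 1 := by
            simp only [hx0]; linarith [min_le_right β (-(μ ⟨n-1, by omega⟩))]
          linarith
        have hgx0 : g x0 < 0 := hnegOn x0 hx0neg
        have hIVT := intermediate_value_Ioo (le_of_lt hx0β) (hcont x0 β (lt_trans hlt hβb))
        obtain ⟨c, hc, hgc⟩ := hIVT ⟨hgx0, hgpos⟩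
        have hcβb := huniq c (lt_trans (lt_trans hc.2 hlt) hβb) hgc
        linarith [hc.2]
  constructor
  · intro H
    rcases lt_or_gt_of_ne (hβ j0) with hβlt | hβgt
    · -- β < μ0
      have hgneg : g β < 0 := by
        have := H j0
        have hs : β - μ j0 < 0 := sub_neg.mpr hβlt
        nlinarith
      exact (hkey hβlt).mp hgneg
    · -- β > μ0: contradiction
      exfalso
      have hgpos : 0 < g β := by
        have := H j0
        have hs : 0 < β - μ j0 := sub_pos.mpr hβgt
        nlinarith
      by_cases hall : ∀ j, μ j < β
      · linarith [hnegAbove β hall]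
      · push_neg at hall
        obtain ⟨j, hj⟩ := hall
        have hjlt : β < μ j := lt_of_le_of_ne hj (hβ j)
        have := H j
        have hs : β - μ j < 0 := sub_neg.mpr hjlt
        nlinarith
  · intro hlt j
    have hβlt : β < μ j0 := lt_trans hlt hβb
    have hgneg : g β < 0 := (hkey hβlt).mpr hlt
    have hs : β - μ j < 0 := sub_neg.mpr (lt_of_lt_of_le hβlt (hle j))
    exact mul_pos_of_neg_of_neg hs hgneg
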